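/- For k ≥ 4 and n ≥ 2, sg(G_{k,n} □ K_n) ≤ k·n + 1, where G_{k,n} is the graph obtained from K_k by replacing every edge with n internally disjoint paths of length 2 and adding a universal vertex. Combined with sg(G_{k,n}) = C(k,2)(n−1) + k, this shows sg(G □ K_n) can be strictly smaller than sg(G). -/

import Mathlib

open SimpleGraph

/-- A choice of one fixed shortest path (geodesic) between each pair of vertices,
symmetric in the sense that the path from `v` to `u` is the reverse of the one
from `u` to `v`. -/
def StrongGeodeticChoice {V : Type*} (G : SimpleGraph V) (p : ∀ u v : V, G.Walk u v) : Prop :=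
  ∀ u v : V, (p u v).IsPath ∧ (p u v).length = G.dist u v ∧ p v u = (p u v).reverse

/-- `S` is a strong geodetic set of `G`: one can fix one shortest path between each
pair of vertices of `S` so that every vertex of `G` lies on some fixed path. -/
def IsStrongGeodeticSet {V : Type*} (G : SimpleGraph V) (S : Set V) : Prop :=
  ∃ p : ∀ u v : V, G.Walk u v, StrongGeodeticChoice G p ∧
    ∀ w : V, ∃ u ∈ S, ∃ v ∈ S, w ∈ (p u v).support

/-- The strong geodetic number of `G`. -/
noncomputable def sg {V : Type*} (G : SimpleGraph V) : ℕ :=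
  sInf {n | ∃ S : Set V, S.ncard = n ∧ IsStrongGeodeticSet G S}

/-- The strong geodetic core number of `G`: the minimum, over minimum strong
geodetic sets `S` together with a choice of fixed geodesics witnessing them,
of the size of a subset `X ⊆ S` such that the fixed paths with an endpoint in `X`
already cover all vertices. -/
noncomputable def sgc {V : Type*} (G : SimpleGraph V) : ℕ :=
  sInf {k | ∃ (S X : Set V) (p : ∀ u v : V, G.Walk u v),
    StrongGeodeticChoice G p ∧ S.ncard = sg G ∧
    (∀ w : V, ∃ u ∈ S, ∃ v ∈ S, w ∈ (p u v).support) ∧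
    X ⊆ S ∧ X.ncard = k ∧
    (∀ w : V, ∃ u ∈ X, ∃ v ∈ S, w ∈ (p u v).support)}

/-- `A` is a geodetic set: every vertex lies on some shortest path between two
vertices of `A`. -/
def IsGeodeticSet {V : Type*} (G : SimpleGraph V) (A : Set V) : Prop :=
  ∀ w : V, ∃ u ∈ A, ∃ v ∈ A, ∃ q : G.Walk u v, q.length = G.dist u v ∧ w ∈ q.support

/-- The geodetic number of `G`. -/
noncomputable def geodeticNumber {V : Type*} (G : SimpleGraph V) : ℕ :=
  sInf {n | ∃ A : Set V, A.ncard = n ∧ IsGeodeticSet G A}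

/-- The graph `G_{k,n}`: obtained from `K_k` by replacing every edge with `n`
internally disjoint paths of length 2 and adding one universal vertex.
Vertices: the `k` original vertices, the subdivision vertices `x_{ij}^{(l)}`
(indexed by an ordered pair `i < j` and `l ∈ Fin n`), and the universal vertex. -/
def Gkn (k n : ℕ) :
    SimpleGraph (Fin k ⊕ ({p : Fin k × Fin k // p.1 < p.2} × Fin n ⊕ Unit)) :=
  SimpleGraph.fromRel (fun a b =>
    match a, b with
    | Sum.inl i, Sum.inr (Sum.inl m) => i = m.1.1.1 ∨ i = m.1.1.2
    | _, Sum.inr (Sum.inr _) => True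
    | _, _ => False)
namespace Stmt18Aux

open SimpleGraph

variable (k n : ℕ)

abbrev V (k n : ℕ) := Fin k ⊕ ({p : Fin k × Fin k // p.1 < p.2} × Fin n ⊕ Unit)
abbrev W (k n : ℕ) := V k n × Fin n
abbrev HH (k n : ℕ) : SimpleGraph (W k n) := Gkn k n □ completeGraph (Fin n)

def uvert : V k n := Sum.inr (Sum.inr ())

lemma adj_uvert (a : V k n) (h : a ≠ uvert k n) : (Gkn k n).Adj a (uvert k n) := by
  rw [Gkn, fromRel_adj]
  refine ⟨h, Or.inl ?_⟩
  rcases a with i | (m | u) <;> trivial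

lemma gkn_not_adj_xx (i j : Fin k) : ¬ (Gkn k n).Adj (Sum.inl i) (Sum.inl j) := by
  rw [Gkn, fromRel_adj]
  rintro ⟨-, h | h⟩ <;> exact h

def epair (i j : Fin k) (h : i ≠ j) : {p : Fin k × Fin k // p.1 < p.2} :=
  if hij : i < j then ⟨(i, j), hij⟩ else ⟨(j, i), h.lt_or_gt.resolve_left hij⟩

lemma epair_symm (i j : Fin k) (h : i ≠ j) : epair k j i h.symm = epair k i j h := by
  rcases h.lt_or_gt with hij | hji
  · simp [epair, hij, not_lt_of_gt hij, hij.ne']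
  · simp [epair, hji, not_lt_of_gt hji, hji.ne']

def midv (i j : Fin k) (h : i ≠ j) (l : Fin n) : V k n := Sum.inr (Sum.inl (epair k i j h, l))

lemma midv_symm (i j : Fin k) (h : i ≠ j) (l : Fin n) :
    midv k n j i h.symm l = midv k n i j h l := by
  unfold midv
  rw [show epair k j i h.symm = epair k i j h from epair_symm k i j h]

lemma adj_midv_left (i j : Fin k) (h : i ≠ j) (l : Fin n) :
    (Gkn k n).Adj (Sum.inl i) (midv k n i j h l) := by
  rw [Gkn, fromRel_adj]
  refine ⟨by simp [midv], Or.inl ?_⟩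
  show i = (epair k i j h).1.1 ∨ i = (epair k i j h).1.2
  unfold epair
  split_ifs <;> simp

lemma adj_midv_right (i j : Fin k) (h : i ≠ j) (l : Fin n) :
    (Gkn k n).Adj (Sum.inl j) (midv k n i j h l) := by
  rw [Gkn, fromRel_adj]
  refine ⟨by simp [midv], Or.inl ?_⟩
  show j = (epair k i j h).1.1 ∨ j = (epair k i j h).1.2
  unfold epair
  split_ifs <;> simp

lemma gkn_connected : (Gkn k n).Connected := by
  constructor
  · intro a b
    by_cases hab : a = b
    · subst hab; exact Reachable.refl a
    · by_cases ha : a = uvert k n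
      · subst ha
        exact ((adj_uvert k n b (Ne.symm hab)).symm).reachable
      · by_cases hb : b = uvert k n
        · subst hb; exact (adj_uvert k n a ha).reachable
        · exact ((adj_uvert k n a ha).reachable).trans
            ((adj_uvert k n b hb).reachable).symm

lemma hh_connected (hn : 1 ≤ n) : (HH k n).Connected := by
  haveI : Nonempty (Fin n) := ⟨⟨0, by omega⟩⟩
  exact (gkn_connected k n).boxProd connected_top

end Stmt18Aux
namespace Stmt18Aux
open SimpleGraph
variable (k n : ℕ)

/-- length-2 geodesic between two original vertices in the same layer (via `u`). -/
def spec2 (i j : Fin k) (s t : Fin n) (hst : s = t) :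
    (HH k n).Walk (Sum.inl i, s) (Sum.inl j, t) :=
  Walk.cons (u := (Sum.inl i, s)) (v := (uvert k n, s)) (by
      rw [boxProd_adj]
      exact Or.inl ⟨adj_uvert k n (Sum.inl i) (by simp [uvert]), rfl⟩)
    (Walk.cons (by
      rw [boxProd_adj]
      exact Or.inl ⟨(adj_uvert k n (Sum.inl j) (by simp [uvert])).symm, hst⟩)
      Walk.nil)

/-- length-3 geodesic between two original vertices in different layers,
through a subdivision vertex whose index is chosen symmetrically. -/
def spec3 (i j : Fin k) (h : i ≠ j) (s t : Fin n) (hst : s ≠ t) :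
    (HH k n).Walk (Sum.inl i, s) (Sum.inl j, t) :=
  Walk.cons (u := (Sum.inl i, s)) (v := (midv k n i j h (if i < j then s else t), s))
    (by rw [boxProd_adj]; exact Or.inl ⟨adj_midv_left k n i j h _, rfl⟩)
    (Walk.cons (v := (midv k n i j h (if i < j then s else t), t))
      (by rw [boxProd_adj]; exact Or.inr ⟨by simp [completeGraph, hst], rfl⟩)
      (Walk.cons
        (by rw [boxProd_adj]; exact Or.inl ⟨(adj_midv_right k n i j h _).symm, rfl⟩)
        Walk.nil))

lemma spec2_length (i j : Fin k) (s t : Fin n) (hst : s = t) :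
    (spec2 k n i j s t hst).length = 2 := rfl

lemma spec3_length (i j : Fin k) (h : i ≠ j) (s t : Fin n) (hst : s ≠ t) :
    (spec3 k n i j h s t hst).length = 3 := rfl

lemma spec2_support (i j : Fin k) (s t : Fin n) (hst : s = t) :
    (spec2 k n i j s t hst).support =
      [(Sum.inl i, s), (uvert k n, s), (Sum.inl j, t)] := rfl

lemma spec3_support (i j : Fin k) (h : i ≠ j) (s t : Fin n) (hst : s ≠ t) :
    (spec3 k n i j h s t hst).support =
      [(Sum.inl i, s), (midv k n i j h (if i < j then s else t), s),
       (midv k n i j h (if i < j then s else t), t), (Sum.inl j, t)] := rfl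

lemma spec2_isPath (i j : Fin k) (hij : i ≠ j) (s t : Fin n) (hst : s = t) :
    (spec2 k n i j s t hst).IsPath := by
  rw [Walk.isPath_def, spec2_support]
  subst hst
  simp [uvert, hij, Prod.ext_iff]

lemma spec3_isPath (i j : Fin k) (h : i ≠ j) (s t : Fin n) (hst : s ≠ t) :
    (spec3 k n i j h s t hst).IsPath := by
  rw [Walk.isPath_def, spec3_support]
  simp [midv, hst, h, Prod.ext_iff, Ne.symm hst]

/-- generic geodesic lower-bound helpers -/
lemma walk_two_le {α : Type*} {G : SimpleGraph α} {a b : α} (hab : a ≠ b)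
    (hadj : ¬ G.Adj a b) (w : G.Walk a b) : 2 ≤ w.length := by
  cases w with
  | nil => exact absurd rfl hab
  | cons h q =>
    cases q with
    | nil => exact absurd h hadj
    | cons h' q' => simp only [Walk.length_cons]; omega

lemma walk_three_le {α : Type*} {G : SimpleGraph α} {a b : α} (hab : a ≠ b)
    (hadj : ¬ G.Adj a b) (hcom : ∀ c, G.Adj a c → G.Adj c b → False)
    (w : G.Walk a b) : 3 ≤ w.length := by
  cases w with
  | nil => exact absurd rfl hab
  | cons h q =>
    cases q with
    | nil => exact absurd h hadj
    | cons h' q' =>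
      cases q' with
      | nil => exact (hcom _ h h').elim
      | cons h'' q'' => simp only [Walk.length_cons]; omega

lemma ne_xx (i j : Fin k) (hij : i ≠ j) (s t : Fin n) :
    ((Sum.inl i, s) : W k n) ≠ (Sum.inl j, t) := by
  simp [Prod.ext_iff, hij]

lemma not_adj_xx (i j : Fin k) (hij : i ≠ j) (s t : Fin n) :
    ¬ (HH k n).Adj (Sum.inl i, s) (Sum.inl j, t) := by
  rw [boxProd_adj]
  rintro (⟨hg, -⟩ | ⟨-, hv⟩)
  · exact gkn_not_adj_xx k n i j hg
  · exact hij (Sum.inl.inj hv)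

lemma no_common (i j : Fin k) (hij : i ≠ j) (s t : Fin n) (hst : s ≠ t) (c : W k n)
    (h1 : (HH k n).Adj (Sum.inl i, s) c) (h2 : (HH k n).Adj c (Sum.inl j, t)) : False := by
  obtain ⟨v, r⟩ := c
  rw [boxProd_adj] at h1 h2
  dsimp only at h1 h2
  rcases h1 with ⟨hg1, hr1⟩ | ⟨hk1, hv1⟩ <;> rcases h2 with ⟨hg2, hr2⟩ | ⟨hk2, hv2⟩
  · exact hst (hr1.trans hr2)
  · exact gkn_not_adj_xx k n i j (hv2 ▸ hg1)
  · exact gkn_not_adj_xx k n i j (hv1 ▸ hg2)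
  · exact hij (Sum.inl.inj (hv1.trans hv2))

lemma dist_xx_same (hc : (HH k n).Connected) (i j : Fin k) (hij : i ≠ j) (s t : Fin n)
    (hst : s = t) : (HH k n).dist (Sum.inl i, s) (Sum.inl j, t) = 2 := by
  refine le_antisymm ?_ ?_
  · have := dist_le (spec2 k n i j s t hst)
    rwa [spec2_length] at this
  · obtain ⟨w, hw⟩ := hc.exists_walk_length_eq_dist (Sum.inl i, s) (Sum.inl j, t)
    rw [← hw]
    exact walk_two_le (ne_xx k n i j hij s t) (not_adj_xx k n i j hij s t) w

lemma dist_xx_diff (hc : (HH k n).Connected) (i j : Fin k) (hij : i ≠ j) (s t : Fin n)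
    (hst : s ≠ t) : (HH k n).dist (Sum.inl i, s) (Sum.inl j, t) = 3 := by
  refine le_antisymm ?_ ?_
  · have := dist_le (spec3 k n i j hij s t hst)
    rwa [spec3_length] at this
  · obtain ⟨w, hw⟩ := hc.exists_walk_length_eq_dist (Sum.inl i, s) (Sum.inl j, t)
    rw [← hw]
    exact walk_three_le (ne_xx k n i j hij s t) (not_adj_xx k n i j hij s t)
      (no_common k n i j hij s t hst) w

lemma exists_geodesic (hc : (HH k n).Connected) (a b : W k n) :
    ∃ w : (HH k n).Walk a b, w.IsPath ∧ w.length = (HH k n).dist a b := by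
  obtain ⟨w, hw⟩ := hc.exists_walk_length_eq_dist a b
  refine ⟨w.bypass, w.bypass_isPath, le_antisymm ?_ (dist_le _)⟩
  calc w.bypass.length ≤ w.length := Walk.length_bypass_le w
    _ = _ := hw

noncomputable def generic (hc : (HH k n).Connected) (a b : W k n) : (HH k n).Walk a b :=
  (exists_geodesic k n hc a b).choose

lemma generic_spec (hc : (HH k n).Connected) (a b : W k n) :
    (generic k n hc a b).IsPath ∧ (generic k n hc a b).length = (HH k n).dist a b :=
  (exists_geodesic k n hc a b).choose_spec

end Stmt18Aux
namespace Stmt18Aux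
open SimpleGraph
variable (k n : ℕ)

/-- the chosen "forward" geodesic. -/
noncomputable def base (hc : (HH k n).Connected) : ∀ a b : W k n, (HH k n).Walk a b :=
  fun a b =>
  match a, b with
  | (Sum.inl i, s), (Sum.inl j, t) =>
    if h : i = j then generic k n hc (Sum.inl i, s) (Sum.inl j, t)
    else if hst : s = t then spec2 k n i j s t hst else spec3 k n i j h s t hst
  | a, b => generic k n hc a b

lemma base_xx (hc : (HH k n).Connected) (i j : Fin k) (s t : Fin n) :
    base k n hc (Sum.inl i, s) (Sum.inl j, t) =
      if h : i = j then generic k n hc (Sum.inl i, s) (Sum.inl j, t)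
      else if hst : s = t then spec2 k n i j s t hst else spec3 k n i j h s t hst := rfl

lemma base_good (hc : (HH k n).Connected) (a b : W k n) :
    (base k n hc a b).IsPath ∧ (base k n hc a b).length = (HH k n).dist a b := by
  obtain ⟨v, s⟩ := a
  obtain ⟨v', t⟩ := b
  rcases v with i | m
  · rcases v' with j | m'
    · rw [base_xx]
      split_ifs with h hst
      · exact generic_spec k n hc _ _
      · exact ⟨spec2_isPath k n i j h s t hst,
          by rw [spec2_length, dist_xx_same k n hc i j h s t hst]⟩
      · exact ⟨spec3_isPath k n i j h s t hst,
          by rw [spec3_length, dist_xx_diff k n hc i j h s t hst]⟩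
    · exact generic_spec k n hc _ _
  · exact generic_spec k n hc _ _

/-- an arbitrary linear-order-like relation used to orient pairs. -/
def wlt (a b : W k n) : Prop :=
  Fintype.equivFin (W k n) a < Fintype.equivFin (W k n) b

lemma wlt_or {a b : W k n} (h : a ≠ b) : wlt k n a b ∨ wlt k n b a := by
  have : Fintype.equivFin (W k n) a ≠ Fintype.equivFin (W k n) b := by
    simpa using h
  exact this.lt_or_gt

lemma wlt_asymm {a b : W k n} (h1 : wlt k n a b) (h2 : wlt k n b a) : False :=
  absurd h1 (lt_asymm h2)

noncomputable instance (a b : W k n) : Decidable (wlt k n a b) := by unfold wlt; infer_instance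

/-- The symmetric choice of geodesics. -/
noncomputable def pfun (hc : (HH k n).Connected) : ∀ a b : W k n, (HH k n).Walk a b :=
  fun a b =>
    if h : a = b then h ▸ Walk.nil
    else if wlt k n a b then base k n hc a b else (base k n hc b a).reverse

lemma pfun_self (hc : (HH k n).Connected) (a : W k n) : pfun k n hc a a = Walk.nil := by
  simp [pfun]

lemma pfun_choice (hc : (HH k n).Connected) : StrongGeodeticChoice (HH k n) (pfun k n hc) := by
  intro a b
  by_cases hab : a = b
  · subst hab
    rw [pfun_self]
    exact ⟨Walk.IsPath.nil, by simp [SimpleGraph.dist_self], by simp [pfun_self]⟩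
  · have hab' : b ≠ a := Ne.symm hab
    rcases wlt_or k n hab with hw | hw
    · have hw' : ¬ wlt k n b a := fun h => wlt_asymm k n hw h
      rw [pfun, dif_neg hab, if_pos hw, pfun, dif_neg hab', if_neg hw']
      exact ⟨(base_good k n hc a b).1, (base_good k n hc a b).2, rfl⟩
    · have hw' : ¬ wlt k n a b := fun h => wlt_asymm k n hw h
      rw [pfun, dif_neg hab, if_neg hw', pfun, dif_neg hab', if_pos hw]
      refine ⟨(base_good k n hc b a).1.reverse, ?_, (Walk.reverse_reverse _).symm⟩
      rw [Walk.length_reverse, (base_good k n hc b a).2, dist_comm]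

lemma mem_pfun (hc : (HH k n).Connected) {a b : W k n} (hab : a ≠ b) {w : W k n}
    (h1 : w ∈ (base k n hc a b).support) (h2 : w ∈ (base k n hc b a).support) :
    w ∈ (pfun k n hc a b).support := by
  rw [pfun, dif_neg hab]
  split_ifs with h
  · exact h1
  · rw [Walk.support_reverse, List.mem_reverse]
    exact h2

end Stmt18Aux
namespace Stmt18Aux
open SimpleGraph
variable (k n : ℕ)

lemma midv_eq (i j : Fin k) (h : i ≠ j) (hij : i < j) (l : Fin n) :
    midv k n i j h l = Sum.inr (Sum.inl (⟨(i, j), hij⟩, l)) := by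
  simp [midv, epair, hij]

def Sset : Set (W k n) := Set.range (fun q : Fin k × Fin n => ((Sum.inl q.1 : V k n), q.2))

lemma Sset_mem (i : Fin k) (t : Fin n) : ((Sum.inl i, t) : W k n) ∈ Sset k n := ⟨(i, t), rfl⟩

lemma Sset_ncard : (Sset k n).ncard = k * n := by
  have hf : Function.Injective (fun q : Fin k × Fin n => ((Sum.inl q.1 : V k n), q.2)) := by
    rintro ⟨a, b⟩ ⟨c, d⟩ h
    simp only [Prod.mk.injEq, Sum.inl.injEq] at h
    exact Prod.ext h.1 h.2
  rw [Sset, ← Set.image_univ, Set.ncard_image_of_injective _ hf, Set.ncard_univ,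
    Nat.card_eq_fintype_card, Fintype.card_prod, Fintype.card_fin, Fintype.card_fin]

lemma cover (hk : 4 ≤ k) (hn : 2 ≤ n) (hc : (HH k n).Connected) (w : W k n) :
    ∃ a ∈ Sset k n, ∃ b ∈ Sset k n, w ∈ (pfun k n hc a b).support := by
  obtain ⟨v, t⟩ := w
  rcases v with i | (m | u)
  · exact ⟨(Sum.inl i, t), Sset_mem k n i t, (Sum.inl i, t), Sset_mem k n i t,
      Walk.start_mem_support _⟩
  · -- subdivision vertex
    obtain ⟨⟨⟨i, j⟩, hij⟩, l⟩ := m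
    have hne : i ≠ j := ne_of_lt hij
    have hji : ¬ j < i := not_lt_of_gt hij
    by_cases hlt : l = t
    · -- need a second layer t' ≠ l
      subst hlt
      set t' : Fin n := if l.val = 0 then ⟨1, by omega⟩ else ⟨0, by omega⟩ with ht'
      have hne' : l ≠ t' := by
        rw [ht']
        split_ifs with h0
        · simp [Fin.ext_iff, h0]
        · simp [Fin.ext_iff, h0]
      refine ⟨(Sum.inl i, l), Sset_mem k n i l, (Sum.inl j, t'), Sset_mem k n j t', ?_⟩
      refine mem_pfun k n hc (ne_xx k n i j hne l t') ?_ ?_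
      · rw [base_xx, dif_neg hne, dif_neg hne', spec3_support]
        simp only [List.mem_cons, List.mem_nil_iff, or_false]
        right; left
        rw [if_pos hij, midv_eq k n i j hne hij l]
      · rw [base_xx, dif_neg (Ne.symm hne), dif_neg (Ne.symm hne'), spec3_support]
        simp only [List.mem_cons, List.mem_nil_iff, or_false]
        right; right; left
        rw [if_neg hji, midv_symm k n i j hne l, midv_eq k n i j hne hij l]
    · -- the pair ((x_i, l), (x_j, t)) covers it
      refine ⟨(Sum.inl i, l), Sset_mem k n i l, (Sum.inl j, t), Sset_mem k n j t, ?_⟩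
      refine mem_pfun k n hc (ne_xx k n i j hne l t) ?_ ?_
      · rw [base_xx, dif_neg hne, dif_neg hlt, spec3_support]
        simp only [List.mem_cons, List.mem_nil_iff, or_false]
        right; right; left
        rw [if_pos hij, midv_eq k n i j hne hij l]
      · rw [base_xx, dif_neg (Ne.symm hne), dif_neg (Ne.symm hlt : ¬ t = l), spec3_support]
        simp only [List.mem_cons, List.mem_nil_iff, or_false]
        right; left
        rw [if_neg hji, midv_symm k n i j hne l, midv_eq k n i j hne hij l]
  · -- universal vertex at layer t
    have h01 : ((⟨0, by omega⟩ : Fin k)) ≠ (⟨1, by omega⟩ : Fin k) := by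
      simp [Fin.ext_iff]
    refine ⟨(Sum.inl ⟨0, by omega⟩, t), Sset_mem k n _ t,
      (Sum.inl ⟨1, by omega⟩, t), Sset_mem k n _ t, ?_⟩
    refine mem_pfun k n hc (ne_xx k n _ _ h01 t t) ?_ ?_
    · rw [base_xx, dif_neg h01, dif_pos rfl, spec2_support]
      simp [uvert]
    · rw [base_xx, dif_neg (Ne.symm h01), dif_pos rfl, spec2_support]
      simp [uvert]

end Stmt18Aux

theorem stmt18 (k n : ℕ) (hk : 4 ≤ k) (hn : 2 ≤ n) :
    sg (Gkn k n □ completeGraph (Fin n)) ≤ k * n + 1 := by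
  classical
  have hc : (Stmt18Aux.HH k n).Connected := Stmt18Aux.hh_connected k n (by omega)
  have hmem : k * n ∈ {m | ∃ S : Set (Stmt18Aux.W k n), S.ncard = m ∧
      IsStrongGeodeticSet (Gkn k n □ completeGraph (Fin n)) S} := by
    refine ⟨Stmt18Aux.Sset k n, Stmt18Aux.Sset_ncard k n, ?_⟩
    exact ⟨Stmt18Aux.pfun k n hc, Stmt18Aux.pfun_choice k n hc,
      Stmt18Aux.cover k n hk hn hc⟩
  have h1 : sg (Gkn k n □ completeGraph (Fin n)) ≤ k * n := Nat.sInf_le hmem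
  omega
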